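/- Let a finite rooted tree be given, with ℓ a leaf, and let w̃ : V⁰ → ℝ satisfy w̃_u > 0 for all u ∈ V⁰. Let x, y, δ ∈ K(T) with δ_u > 0 for all u, let λ : V → ℝ satisfy λ_u ≥ 0 for all u and λ_u = 0 for every leaf u, let s ≥ 0, and let x'_u for u ∈ V⁰∖{c_r} be given by the mirror-descent dynamic. Let d ≥ 2 be a real and k ≥ 1 an integer with δ_ℓ ≥ d^{1−k}. Then the rate of change of the modified Bregman divergence D = Σ_{u∈V⁰} w̃_u·(2·y_u·log((1+δ_u)/(x_u+δ_u)) + x_u) satisfies s·(2·y_ℓ·log((1+δ_ℓ)/(x_ℓ+δ_ℓ)) + x_ℓ) + Σ_{u ∈ V⁰∖{c_r}} w̃_u·x'_u·(1 − 2·y_u/(x_u+δ_u)) ≤ −s·x_ℓ + 2·y_ℓ·s·(2 + k·log d). -/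
import Mathlib


open Finset Real


private lemma stmt2_aux1 (d D : ℝ) (k : ℕ) (hd : 2 ≤ d) (hk : 1 ≤ k)
    (hD : d ^ (1 - (k:ℤ)) ≤ D) : 1 + D ≤ d ^ k * D := by
  have hd0 : (0:ℝ) < d := by linarith
  have hdk1 : (1:ℝ) ≤ d ^ k := one_le_pow₀ (by linarith)
  have he1 : d ^ k * d ^ (1 - (k:ℤ)) = d := by
    rw [← zpow_natCast d k, ← zpow_add₀ (ne_of_gt hd0)]
    norm_num
  have he2 : d ^ (1 - (k:ℤ)) ≤ 1 :=
    zpow_le_one_of_nonpos₀ (by linarith) (by omega)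
  nlinarith [mul_le_mul_of_nonneg_left hD (by linarith : (0:ℝ) ≤ d ^ k - 1),
    zpow_pos hd0 (1 - (k:ℤ))]

private lemma stmt2_aux_ratio (X D P : ℝ) (hX : 0 ≤ X) (hD : 0 < D)
    (hP : 0 ≤ P) (h : 1 + D ≤ P * D) : (1 + D) / (X + D) ≤ P := by
  rw [div_le_iff₀ (by linarith)]
  nlinarith

private lemma stmt2_auxA (X Y D : ℝ) (hX : 0 ≤ X) (hY : 0 ≤ Y) (hD : 0 < D) :
    X * (2 * Y / (X + D)) ≤ 2 * Y := by
  rw [← mul_div_assoc, div_le_iff₀ (by linarith)]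
  nlinarith

private lemma stmt2_aux2 (X Y S L M A : ℝ) (hS : 0 ≤ S) (hY : 0 ≤ Y)
    (hXA : X * A ≤ 2 * Y) (hLM : L ≤ M) :
    S * (2 * Y * L + X) + -2 * X * S * (1 - A) ≤ -S * X + 2 * Y * S * (2 + M) := by
  nlinarith [mul_le_mul_of_nonneg_left hXA hS,
    mul_le_mul_of_nonneg_left hLM (mul_nonneg hS hY)]

private lemma stmt2_aux3 (S c : ℝ) (hS : 0 ≤ S) (hc : 0 ≤ c) :
    S * (2 * 1 * Real.log ((1 + 1) / (1 + 1)) + 1) + 0 ≤ -S * 1 + 2 * 1 * S * (2 + c) := by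
  have h0 : Real.log (((1:ℝ) + 1) / (1 + 1)) = 0 := by norm_num
  rw [h0]
  nlinarith

/-- Lemma: upper bound on the rate of change of the modified Bregman
divergence `D = Σ_{u∈V⁰} w̃_u·(2·y_u·log((1+δ_u)/(x_u+δ_u)) + x_u)` in a continuous step. -/
theorem stmt2
    {V : Type*} [Fintype V] [DecidableEq V]
    (r : V) (p : V → V) (dep : V → ℕ)
    (hdep_r : dep r = 0)
    (hdep : ∀ u, u ≠ r → dep u = dep (p u) + 1)
    (cr : V) (hcr : ∀ v, (v ≠ r ∧ p v = r) ↔ v = cr)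
    -- ℓ is a leaf
    (ℓ : V) (hℓ : ℓ ≠ r ∧ ∀ v, v ≠ r → p v ≠ ℓ)
    -- revised weights: w̃ > 0 on V⁰
    (wt : V → ℝ) (hwt : ∀ u, u ≠ r → 0 < wt u)
    -- x, y, δ ∈ K(T)
    (x y δ : V → ℝ)
    (hx : x r = 1 ∧ (∀ u, u ≠ r → 0 ≤ x u) ∧
      ∀ u, ¬(u ≠ r ∧ ∀ v, v ≠ r → p v ≠ u) →
        ∑ v ∈ univ.filter (fun v => v ≠ r ∧ p v = u), x v = x u)
    (hy : y r = 1 ∧ (∀ u, u ≠ r → 0 ≤ y u) ∧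
      ∀ u, ¬(u ≠ r ∧ ∀ v, v ≠ r → p v ≠ u) →
        ∑ v ∈ univ.filter (fun v => v ≠ r ∧ p v = u), y v = y u)
    (hδ : δ r = 1 ∧ (∀ u, u ≠ r → 0 ≤ δ u) ∧
      ∀ u, ¬(u ≠ r ∧ ∀ v, v ≠ r → p v ≠ u) →
        ∑ v ∈ univ.filter (fun v => v ≠ r ∧ p v = u), δ v = δ u)
    (hδpos : ∀ u, u ≠ r → 0 < δ u)
    -- Lagrange multipliers
    (lam : V → ℝ)
    (hlam_nonneg : ∀ u, 0 ≤ lam u)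
    (hlam_leaf : ∀ u, (u ≠ r ∧ ∀ v, v ≠ r → p v ≠ u) → lam u = 0)
    -- rate and mirror-descent dynamic
    (s : ℝ) (hs : 0 ≤ s)
    (x' : V → ℝ)
    (hx' : ∀ u, u ≠ r → u ≠ cr →
      x' u = (-2 * x u * s * (if u = ℓ then 1 else 0)
              + (x u + δ u) * (lam (p u) - lam u)) / wt u)
    -- parameters d and k
    (d : ℝ) (hd : 2 ≤ d) (k : ℕ) (hk : 1 ≤ k)
    (hδℓ : d ^ (1 - (k : ℤ)) ≤ δ ℓ) :
    s * (2 * y ℓ * Real.log ((1 + δ ℓ) / (x ℓ + δ ℓ)) + x ℓ)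
        + ∑ u ∈ univ.filter (fun u => u ≠ r ∧ u ≠ cr),
            wt u * x' u * (1 - 2 * y u / (x u + δ u))
      ≤ -s * x ℓ + 2 * y ℓ * s * (2 + (k : ℝ) * Real.log d) := by
  obtain ⟨hxr, hxnn, hxcons⟩ := hx
  obtain ⟨hyr, hynn, hycons⟩ := hy
  obtain ⟨hδr, hδnn, hδcons⟩ := hδ
  set f : V → ℝ := fun u => x u + δ u - 2 * y u with hf
  have hcr_ne : cr ≠ r := ((hcr cr).mpr rfl).1
  have hfiber_r : univ.filter (fun v => v ≠ r ∧ p v = r) = {cr} := by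
    ext v; simp [hcr v]
  have hrnotleaf : ¬(r ≠ r ∧ ∀ v, v ≠ r → p v ≠ r) := by simp
  have hxcr : x cr = 1 := by
    have h := hxcons r hrnotleaf; rw [hfiber_r] at h; simpa [hxr] using h
  have hycr : y cr = 1 := by
    have h := hycons r hrnotleaf; rw [hfiber_r] at h; simpa [hyr] using h
  have hδcr : δ cr = 1 := by
    have h := hδcons r hrnotleaf; rw [hfiber_r] at h; simpa [hδr] using h
  have hfr : f r = 0 := by simp only [hf]; rw [hxr, hyr, hδr]; ring
  have hfcr : f cr = 0 := by simp only [hf]; rw [hxcr, hycr, hδcr]; ring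
  have hfcons : ∀ w, ¬(w ≠ r ∧ ∀ v, v ≠ r → p v ≠ w) →
      ∑ v ∈ univ.filter (fun v => v ≠ r ∧ p v = w), f v = f w := by
    intro w hw
    simp only [hf, Finset.sum_sub_distrib, ← Finset.mul_sum,
      hxcons w hw, hycons w hw, hδcons w hw, Finset.sum_add_distrib]
  -- the Lagrange-multiplier part telescopes to zero
  have key : ∑ u ∈ univ.filter (fun u => u ≠ r), (lam (p u) - lam u) * f u = 0 := by
    have h1 : ∑ u ∈ univ.filter (fun u => u ≠ r), lam (p u) * f u
        = ∑ w, lam w * f w := by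
      rw [← Finset.sum_fiberwise (univ.filter (fun u => u ≠ r)) p
        (fun u => lam (p u) * f u)]
      refine Finset.sum_congr rfl fun w _ => ?_
      rw [Finset.filter_filter]
      have hinner : ∑ u ∈ univ.filter (fun u => u ≠ r ∧ p u = w), lam (p u) * f u
          = lam w * ∑ u ∈ univ.filter (fun u => u ≠ r ∧ p u = w), f u := by
        rw [Finset.mul_sum]
        refine Finset.sum_congr rfl fun u hu => ?_
        simp only [Finset.mem_filter] at hu
        rw [hu.2.2]
      rw [hinner]
      by_cases hw : (w ≠ r ∧ ∀ v, v ≠ r → p v ≠ w)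
      · simp [hlam_leaf w hw]
      · rw [hfcons w hw]
    have h2 : ∑ u ∈ univ.filter (fun u => u ≠ r), lam u * f u = ∑ w, lam w * f w := by
      rw [Finset.filter_ne' univ r]
      exact Finset.sum_erase _ (by rw [hfr]; ring)
    simp only [sub_mul, Finset.sum_sub_distrib, h1, h2, sub_self]
  -- rewrite each summand of the main sum
  have hterm : ∀ u ∈ univ.filter (fun u => u ≠ r ∧ u ≠ cr),
      wt u * x' u * (1 - 2 * y u / (x u + δ u))
        = (lam (p u) - lam u) * f u
          + (if u = ℓ then -2 * x u * s * (1 - 2 * y u / (x u + δ u)) else 0) := by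
    intro u hu
    simp only [Finset.mem_filter] at hu
    have hur := hu.2.1
    have hxd : x u + δ u ≠ 0 := by
      have h1 := hxnn u hur; have h2 := hδpos u hur; positivity
    have hwu : wt u ≠ 0 := ne_of_gt (hwt u hur)
    have hc : (x u + δ u) * (2 * y u / (x u + δ u)) = 2 * y u := by
      field_simp
    rw [hx' u hur hu.2.2, mul_comm (wt u), div_mul_cancel₀ _ hwu]
    simp only [hf]
    by_cases huℓ : u = ℓ
    · simp only [huℓ, eq_self_iff_true, if_true]
      rw [huℓ] at hc
      linear_combination (lam ℓ - lam (p ℓ)) * hc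
    · simp only [if_neg huℓ]
      linear_combination (lam u - lam (p u)) * hc
  rw [Finset.sum_congr rfl hterm, Finset.sum_add_distrib]
  -- the lam part of the restricted sum is zero
  have hfilter : univ.filter (fun u => u ≠ r ∧ u ≠ cr)
      = (univ.filter (fun u => u ≠ r)).erase cr := by
    rw [← Finset.filter_ne', Finset.filter_filter]
  have hlampart : ∑ u ∈ univ.filter (fun u => u ≠ r ∧ u ≠ cr),
      (lam (p u) - lam u) * f u = 0 := by
    rw [hfilter, Finset.sum_erase _ (by rw [hfcr]; ring)]
    exact key
  rw [hlampart, zero_add, Finset.sum_ite_eq']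
  have hd0 : (0:ℝ) < d := by linarith
  have hlogd : 0 ≤ Real.log d := Real.log_nonneg (by linarith)
  by_cases hℓcr : ℓ = cr
  · -- ℓ = cr: all quantities at ℓ equal 1
    have hmem : ℓ ∉ univ.filter (fun u => u ≠ r ∧ u ≠ cr) := by
      simp [hℓcr]
    rw [if_neg hmem]
    subst hℓcr
    rw [hxcr, hycr, hδcr]
    exact stmt2_aux3 s ((k:ℝ) * Real.log d) hs
      (mul_nonneg (Nat.cast_nonneg k) hlogd)
  · have hmem : ℓ ∈ univ.filter (fun u => u ≠ r ∧ u ≠ cr) := by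
      simp [hℓ.1, hℓcr]
    rw [if_pos hmem]
    have hXnn := hxnn ℓ hℓ.1
    have hDpos := hδpos ℓ hℓ.1
    have hYnn := hynn ℓ hℓ.1
    have hdk1 : (1:ℝ) ≤ d ^ k := one_le_pow₀ (by linarith)
    have hratio : (1 + δ ℓ) / (x ℓ + δ ℓ) ≤ d ^ k :=
      stmt2_aux_ratio (x ℓ) (δ ℓ) (d ^ k) hXnn hDpos (by linarith)
        (stmt2_aux1 d (δ ℓ) k hd hk hδℓ)
    have hL : Real.log ((1 + δ ℓ) / (x ℓ + δ ℓ)) ≤ (k:ℝ) * Real.log d := by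
      rw [← Real.log_pow]
      refine Real.log_le_log ?_ hratio
      have : 0 < x ℓ + δ ℓ := by linarith
      positivity
    exact stmt2_aux2 (x ℓ) (y ℓ) s _ _ _ hs hYnn
      (stmt2_auxA (x ℓ) (y ℓ) (δ ℓ) hXnn hYnn hDpos) hL
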